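/- arXiv:1302.1033 — 4 statements merged into one kernel-verified Lean document; each statement's English description precedes it below -/
import Mathlib

section
/- Let r₁ ∈ (0,1), a₁ > 1, a₂ > 1, and let k₁ = (1-a₁)/(1-a₁a₂), k₂ = (1-a₂)/(1-a₁a₂). Then for all u ∈ [0,k₁] and v ∈ [0,1-k₂], one has 0 ≤ k₁ + (u-k₁)·exp(r₁(u-a₁v)) ≤ k₁, and this expression is monotone nondecreasing in u and in v on these intervals. -/
lemma keyAnti (r₁ k₁ : ℝ) (hr0 : 0 < r₁) (hrk : r₁ * k₁ ≤ 1) :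
    AntitoneOn (fun u => (k₁ - u) * Real.exp (r₁ * u)) (Set.Icc 0 k₁) := by
  have hderiv : ∀ x : ℝ, HasDerivAt (fun u => (k₁ - u) * Real.exp (r₁ * u))
      ((-1) * Real.exp (r₁ * x) + (k₁ - x) * (Real.exp (r₁ * x) * r₁)) x := by
    intro x
    have h1 : HasDerivAt (fun u : ℝ => k₁ - u) (-1) x := by
      simpa using (hasDerivAt_id x).const_sub k₁
    have h2 : HasDerivAt (fun u : ℝ => Real.exp (r₁ * u)) (Real.exp (r₁ * x) * r₁) x := by
      have := ((hasDerivAt_id x).const_mul r₁).exp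
      simpa using this
    exact h1.mul h2
  apply antitoneOn_of_deriv_nonpos (convex_Icc 0 k₁)
  · exact Continuous.continuousOn (by continuity)
  · intro x hx
    exact (hderiv x).differentiableAt.differentiableWithinAt
  · intro x hx
    rw [interior_Icc] at hx
    rw [(hderiv x).deriv]
    have hE := Real.exp_pos (r₁ * x)
    have hx0 : 0 < r₁ * x := mul_pos hr0 hx.1
    nlinarith [mul_nonneg hE.le (show (0:ℝ) ≤ 1 - r₁ * (k₁ - x) by nlinarith)]

theorem stmt5 (r₁ a₁ a₂ k₁ k₂ : ℝ) (hr : r₁ ∈ Set.Ioo (0:ℝ) 1)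
    (ha₁ : 1 < a₁) (ha₂ : 1 < a₂)
    (hk₁ : k₁ = (1 - a₁) / (1 - a₁ * a₂)) (hk₂ : k₂ = (1 - a₂) / (1 - a₁ * a₂)) :
    (∀ u ∈ Set.Icc (0:ℝ) k₁, ∀ v ∈ Set.Icc (0:ℝ) (1 - k₂),
      0 ≤ k₁ + (u - k₁) * Real.exp (r₁ * (u - a₁ * v)) ∧
      k₁ + (u - k₁) * Real.exp (r₁ * (u - a₁ * v)) ≤ k₁) ∧
    (∀ v ∈ Set.Icc (0:ℝ) (1 - k₂),
      MonotoneOn (fun u => k₁ + (u - k₁) * Real.exp (r₁ * (u - a₁ * v))) (Set.Icc 0 k₁)) ∧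
    (∀ u ∈ Set.Icc (0:ℝ) k₁,
      MonotoneOn (fun v => k₁ + (u - k₁) * Real.exp (r₁ * (u - a₁ * v))) (Set.Icc 0 (1 - k₂))) := by
  obtain ⟨hr0, hr1⟩ := hr
  have hD : 0 < a₁ * a₂ - 1 := by nlinarith
  have hk₁' : k₁ = (a₁ - 1) / (a₁ * a₂ - 1) := by
    rw [hk₁]; rw [div_eq_div_iff (by nlinarith) (by nlinarith)]; ring
  have hk₁pos : 0 < k₁ := by rw [hk₁']; exact div_pos (by linarith) hD
  have hk₁lt : k₁ < 1 := by
    rw [hk₁', div_lt_one hD]; nlinarith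
  have hrk : r₁ * k₁ ≤ 1 := by nlinarith
  have hk₂' : k₂ = (a₂ - 1) / (a₁ * a₂ - 1) := by
    rw [hk₂]; rw [div_eq_div_iff (by nlinarith) (by nlinarith)]; ring
  have hk₂pos : 0 < k₂ := by rw [hk₂']; exact div_pos (by linarith) hD
  have hAnti := keyAnti r₁ k₁ hr0 hrk
  have hsplit : ∀ u v : ℝ, Real.exp (r₁ * (u - a₁ * v))
      = Real.exp (r₁ * u) * Real.exp (-(r₁ * (a₁ * v))) := by
    intro u v; rw [← Real.exp_add]; ring_nf
  refine ⟨?_, ?_, ?_⟩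
  · intro u hu v hv
    have hu0 := hu.1; have huk := hu.2
    have hv0 := hv.1
    have hEpos := Real.exp_pos (r₁ * (u - a₁ * v))
    constructor
    · -- lower bound
      have h1 : (k₁ - u) * Real.exp (r₁ * u) ≤ (k₁ - 0) * Real.exp (r₁ * 0) :=
        hAnti (by constructor <;> [rfl; exact hk₁pos.le]) hu hu0
      have h2 : Real.exp (r₁ * (u - a₁ * v)) ≤ Real.exp (r₁ * u) := by
        apply Real.exp_le_exp.mpr
        nlinarith [mul_nonneg (mul_nonneg hr0.le (by linarith : (0:ℝ) ≤ a₁)) hv0]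
      have h3 : (k₁ - u) * Real.exp (r₁ * (u - a₁ * v)) ≤ (k₁ - u) * Real.exp (r₁ * u) :=
        mul_le_mul_of_nonneg_left h2 (by linarith)
      simp only [mul_zero, Real.exp_zero, mul_one, sub_zero] at h1
      nlinarith
    · nlinarith
  · intro v hv
    intro u₁ hu₁ u₂ hu₂ h12
    have hF : (k₁ - u₂) * Real.exp (r₁ * u₂) ≤ (k₁ - u₁) * Real.exp (r₁ * u₁) :=
      hAnti hu₁ hu₂ h12
    have hc : 0 < Real.exp (-(r₁ * (a₁ * v))) := Real.exp_pos _
    simp only [hsplit]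
    nlinarith [mul_le_mul_of_nonneg_right hF hc.le]
  · intro u hu
    intro v₁ hv₁ v₂ hv₂ h12
    have hE : Real.exp (r₁ * (u - a₁ * v₂)) ≤ Real.exp (r₁ * (u - a₁ * v₁)) := by
      apply Real.exp_le_exp.mpr
      nlinarith [mul_nonneg (mul_nonneg hr0.le (by linarith : (0:ℝ) ≤ a₁))
        (by linarith : (0:ℝ) ≤ v₂ - v₁)]
    have := mul_le_mul_of_nonpos_left hE (by linarith [hu.2] : u - k₁ ≤ 0)
    simp only []
    linarith
end

section
/- Let r₂ ∈ (0,1), a₂ > 1, a₁ > 1, and let k₁ = (1-a₁)/(1-a₁a₂), k₂ = (1-a₂)/(1-a₁a₂). Then for all u ∈ [0,k₁] and v ∈ [0,1-k₂], one has 0 ≤ -k₂ + (v+k₂)·exp(r₂(a₂u-v)) ≤ 1-k₂, and this expression is monotone nondecreasing in u and in v on these intervals. -/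
theorem stmt6 (r₂ a₁ a₂ k₁ k₂ : ℝ) (hr : r₂ ∈ Set.Ioo (0:ℝ) 1)
    (ha₁ : 1 < a₁) (ha₂ : 1 < a₂)
    (hk₁ : k₁ = (1 - a₁) / (1 - a₁ * a₂)) (hk₂ : k₂ = (1 - a₂) / (1 - a₁ * a₂)) :
    (∀ u ∈ Set.Icc (0:ℝ) k₁, ∀ v ∈ Set.Icc (0:ℝ) (1 - k₂),
      0 ≤ -k₂ + (v + k₂) * Real.exp (r₂ * (a₂ * u - v)) ∧
      -k₂ + (v + k₂) * Real.exp (r₂ * (a₂ * u - v)) ≤ 1 - k₂) ∧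
    (∀ v ∈ Set.Icc (0:ℝ) (1 - k₂),
      MonotoneOn (fun u => -k₂ + (v + k₂) * Real.exp (r₂ * (a₂ * u - v))) (Set.Icc 0 k₁)) ∧
    (∀ u ∈ Set.Icc (0:ℝ) k₁,
      MonotoneOn (fun v => -k₂ + (v + k₂) * Real.exp (r₂ * (a₂ * u - v))) (Set.Icc 0 (1 - k₂))) := by
  obtain ⟨hr0, hr1⟩ := hr
  have hden : 1 - a₁ * a₂ < 0 := by nlinarith
  have hdne : 1 - a₁ * a₂ ≠ 0 := ne_of_lt hden
  have hk1pos : 0 < k₁ := by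
    rw [hk₁]; exact div_pos_of_neg_of_neg (by linarith) hden
  have hk2pos : 0 < k₂ := by
    rw [hk₂]; exact div_pos_of_neg_of_neg (by linarith) hden
  have hk2eq : k₂ * (1 - a₁ * a₂) = 1 - a₂ := by rw [hk₂]; exact div_mul_cancel₀ _ hdne
  have hk2lt : k₂ < 1 := by nlinarith
  have hkey : a₂ * k₁ + k₂ = 1 := by
    rw [hk₁, hk₂, mul_div_assoc', ← add_div, div_eq_one_iff_eq hdne]; ring
  -- monotone in u
  have monU : ∀ v ∈ Set.Icc (0:ℝ) (1 - k₂),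
      MonotoneOn (fun u => -k₂ + (v + k₂) * Real.exp (r₂ * (a₂ * u - v))) (Set.Icc 0 k₁) := by
    intro v hv x _ y _ hxy
    have h1 : 0 ≤ v + k₂ := by linarith [hv.1]
    have ha₂0 : (0:ℝ) ≤ a₂ := by linarith
    have h2 : r₂ * (a₂ * x - v) ≤ r₂ * (a₂ * y - v) := by gcongr
    have := mul_le_mul_of_nonneg_left (Real.exp_le_exp.2 h2) h1
    simpa using this
  -- derivative in v
  have hd : ∀ u v : ℝ, HasDerivAt (fun v => -k₂ + (v + k₂) * Real.exp (r₂ * (a₂ * u - v)))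
      (Real.exp (r₂ * (a₂ * u - v)) * (1 - r₂ * (v + k₂))) v := by
    intro u v
    have h1 : HasDerivAt (fun v : ℝ => r₂ * (a₂ * u - v)) (r₂ * (0 - 1)) v := by
      simpa using (((hasDerivAt_id v).const_sub (a₂ * u))).const_mul r₂
    have h2 := h1.exp
    have h3 : HasDerivAt (fun v : ℝ => v + k₂) 1 v := (hasDerivAt_id v).add_const k₂
    have h4 := (h3.mul h2).const_add (-k₂)
    exact h4.congr_deriv (by ring)
  have monV : ∀ u ∈ Set.Icc (0:ℝ) k₁,
      MonotoneOn (fun v => -k₂ + (v + k₂) * Real.exp (r₂ * (a₂ * u - v))) (Set.Icc 0 (1 - k₂)) := by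
    intro u _
    apply monotoneOn_of_deriv_nonneg (convex_Icc 0 (1 - k₂))
    · apply Continuous.continuousOn
      continuity
    · intro x _
      exact (hd u x).differentiableAt.differentiableWithinAt
    · intro x hx
      rw [interior_Icc] at hx
      rw [(hd u x).deriv]
      have hx1 : x < 1 - k₂ := hx.2
      have : r₂ * (x + k₂) < 1 := by nlinarith [hx.1]
      have := Real.exp_pos (r₂ * (a₂ * u - x))
      nlinarith
  refine ⟨?_, monU, monV⟩
  intro u hu v hv
  have h0u : (0:ℝ) ∈ Set.Icc (0:ℝ) k₁ := ⟨le_refl 0, le_of_lt hk1pos⟩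
  have h0v : (0:ℝ) ∈ Set.Icc (0:ℝ) (1 - k₂) := ⟨le_refl 0, by linarith⟩
  have hTv : (1 - k₂) ∈ Set.Icc (0:ℝ) (1 - k₂) := ⟨by linarith, le_refl _⟩
  have hTu : k₁ ∈ Set.Icc (0:ℝ) k₁ := ⟨le_of_lt hk1pos, le_refl _⟩
  constructor
  · have h1 := monU v hv h0u hu hu.1
    have h2 := monV 0 h0u h0v hv hv.1
    simp only at h1 h2
    have h3 : -k₂ + (0 + k₂) * Real.exp (r₂ * (a₂ * 0 - 0)) = 0 := by
      norm_num
    linarith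
  · have h1 := monV u hu hv hTv hv.2
    have h2 := monU (1 - k₂) hTv hu hTu hu.2
    simp only at h1 h2
    have h3 : -k₂ + (1 - k₂ + k₂) * Real.exp (r₂ * (a₂ * k₁ - (1 - k₂))) = 1 - k₂ := by
      have : a₂ * k₁ - (1 - k₂) = 0 := by linarith
      rw [this, mul_zero, Real.exp_zero]
      ring
    linarith
end

section
/- Let r₁, r₂ ∈ (0,1), a₁, a₂ > 1, and k₁ = (1-a₁)/(1-a₁a₂), k₂ = (1-a₂)/(1-a₁a₂). Let m₁, m₂ ≥ 1 be real numbers (representing moment generating values ∫ e^{μy} lᵢ(y) dy), and define the 2×2 matrix B with entries B₁₁ = (1-r₁k₁)m₁, B₁₂ = a₁r₁k₁m₂, B₂₁ = a₂r₂k₂m₁, B₂₂ = (1-r₂k₂)m₂. If m₁ ≤ m₂, then det(m₁·I - B) < 0; consequently the largest eigenvalue of B is strictly greater than m₁. -/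
lemma sqrt_aux (x A E : ℝ) (hEpos : 0 < E) (hsq : (x - A) ^ 2 < E) :
    x < A + Real.sqrt E := by
  rcases le_or_gt (x - A) 0 with h | h
  · have := Real.sqrt_pos.mpr hEpos
    linarith
  · have := (Real.lt_sqrt h.le).mpr hsq
    linarith


theorem stmt10 (r₁ r₂ a₁ a₂ k₁ k₂ m₁ m₂ : ℝ)
    (hr₁ : r₁ ∈ Set.Ioo (0:ℝ) 1) (hr₂ : r₂ ∈ Set.Ioo (0:ℝ) 1)
    (ha₁ : 1 < a₁) (ha₂ : 1 < a₂)
    (hk₁ : k₁ = (1 - a₁) / (1 - a₁ * a₂)) (hk₂ : k₂ = (1 - a₂) / (1 - a₁ * a₂))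
    (hm₁ : 1 ≤ m₁) (hm₂ : 1 ≤ m₂) (hle : m₁ ≤ m₂) :
    Matrix.det (m₁ • (1 : Matrix (Fin 2) (Fin 2) ℝ) -
      !![(1 - r₁ * k₁) * m₁, a₁ * r₁ * k₁ * m₂; a₂ * r₂ * k₂ * m₁, (1 - r₂ * k₂) * m₂]) < 0 ∧
    m₁ < ((1 - r₁ * k₁) * m₁ + (1 - r₂ * k₂) * m₂) / 2 +
      Real.sqrt ((((1 - r₁ * k₁) * m₁ - (1 - r₂ * k₂) * m₂) / 2) ^ 2 +
        (a₁ * r₁ * k₁ * m₂) * (a₂ * r₂ * k₂ * m₁)) := by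
  obtain ⟨hr1a, hr1b⟩ := hr₁
  obtain ⟨hr2a, hr2b⟩ := hr₂
  have hd : 0 < a₁ * a₂ - 1 := by nlinarith
  have hk1v : k₁ = (a₁ - 1) / (a₁ * a₂ - 1) := by
    rw [hk₁, div_eq_div_iff (by nlinarith) (by nlinarith)]; ring
  have hk2v : k₂ = (a₂ - 1) / (a₁ * a₂ - 1) := by
    rw [hk₂, div_eq_div_iff (by nlinarith) (by nlinarith)]; ring
  have hk1pos : 0 < k₁ := by rw [hk1v]; exact div_pos (by linarith) hd
  have hk2pos : 0 < k₂ := by rw [hk2v]; exact div_pos (by linarith) hd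
  have hk1lt : k₁ < 1 := by rw [hk1v, div_lt_one hd]; nlinarith
  have hk2lt : k₂ < 1 := by rw [hk2v, div_lt_one hd]; nlinarith
  have hm1pos : (0:ℝ) < m₁ := by linarith
  have hm2pos : (0:ℝ) < m₂ := by linarith
  have hc1 : 0 < r₁ * k₁ := mul_pos hr1a hk1pos
  have hc2 : 0 < r₂ * k₂ := mul_pos hr2a hk2pos
  have hc1' : r₁ * k₁ < 1 := by nlinarith
  have hc2' : r₂ * k₂ < 1 := by nlinarith
  have hdet : (m₁ - (1 - r₁ * k₁) * m₁) * (m₁ - (1 - r₂ * k₂) * m₂) -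
      (a₁ * r₁ * k₁ * m₂) * (a₂ * r₂ * k₂ * m₁) < 0 := by
    nlinarith [mul_pos (mul_pos hc1 hm1pos) (mul_pos hc2 hm2pos),
      mul_nonneg (le_of_lt (mul_pos hc1 hm1pos)) (sub_nonneg.mpr hle),
      mul_pos (mul_pos (mul_pos hc1 hm1pos) (mul_pos hc2 hm2pos)) hd]
  constructor
  · have hmat : m₁ • (1 : Matrix (Fin 2) (Fin 2) ℝ) -
        !![(1 - r₁ * k₁) * m₁, a₁ * r₁ * k₁ * m₂; a₂ * r₂ * k₂ * m₁, (1 - r₂ * k₂) * m₂] =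
        !![m₁ - (1 - r₁ * k₁) * m₁, -(a₁ * r₁ * k₁ * m₂);
           -(a₂ * r₂ * k₂ * m₁), m₁ - (1 - r₂ * k₂) * m₂] := by
      ext i j
      fin_cases i <;> fin_cases j <;>
        simp [Matrix.sub_apply, Matrix.smul_apply, Matrix.one_apply]
    rw [hmat, Matrix.det_fin_two_of]
    nlinarith [hdet]
  · have ha1p : (0:ℝ) < a₁ := by linarith
    have ha2p : (0:ℝ) < a₂ := by linarith
    apply sqrt_aux
    · positivity
    · nlinarith [hdet]
end

section
/- Under the hypotheses r₁, r₂ ∈ (0,1), a₁, a₂ > 1, k₁ = (1-a₁)/(1-a₁a₂), k₂ = (1-a₂)/(1-a₁a₂), and m₁, m₂ ≥ 1 with m₁ ≤ m₂, the key determinant identity holds: det(m₁·I - B) = r₁k₁m₁·(m₁ - m₂ + (1-a₁a₂)r₂k₂m₂), where B is the matrix with entries B₁₁ = (1-r₁k₁)m₁, B₁₂ = a₁r₁k₁m₂, B₂₁ = a₂r₂k₂m₁, B₂₂ = (1-r₂k₂)m₂, and this quantity is ≤ (1-a₁a₂)r₁k₁r₂k₂m₁m₂ < 0. -/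
theorem stmt11 (r₁ r₂ a₁ a₂ k₁ k₂ m₁ m₂ : ℝ)
    (hr₁ : r₁ ∈ Set.Ioo (0:ℝ) 1) (hr₂ : r₂ ∈ Set.Ioo (0:ℝ) 1)
    (ha₁ : 1 < a₁) (ha₂ : 1 < a₂)
    (hk₁ : k₁ = (1 - a₁) / (1 - a₁ * a₂)) (hk₂ : k₂ = (1 - a₂) / (1 - a₁ * a₂))
    (hm₁ : 1 ≤ m₁) (hm₂ : 1 ≤ m₂) (hle : m₁ ≤ m₂) :
    Matrix.det (m₁ • (1 : Matrix (Fin 2) (Fin 2) ℝ) -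
        !![(1 - r₁ * k₁) * m₁, a₁ * r₁ * k₁ * m₂; a₂ * r₂ * k₂ * m₁, (1 - r₂ * k₂) * m₂]) =
      r₁ * k₁ * m₁ * (m₁ - m₂ + (1 - a₁ * a₂) * r₂ * k₂ * m₂) ∧
    r₁ * k₁ * m₁ * (m₁ - m₂ + (1 - a₁ * a₂) * r₂ * k₂ * m₂) ≤
      (1 - a₁ * a₂) * r₁ * k₁ * r₂ * k₂ * m₁ * m₂ ∧
    (1 - a₁ * a₂) * r₁ * k₁ * r₂ * k₂ * m₁ * m₂ < 0 := by
  obtain ⟨hr₁0, hr₁1⟩ := hr₁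
  obtain ⟨hr₂0, hr₂1⟩ := hr₂
  have hd : 1 - a₁ * a₂ < 0 := by nlinarith
  have hk1pos : 0 < k₁ := by
    rw [hk₁]; exact div_pos_of_neg_of_neg (by linarith) hd
  have hk2pos : 0 < k₂ := by
    rw [hk₂]; exact div_pos_of_neg_of_neg (by linarith) hd
  have hm₁0 : (0:ℝ) < m₁ := by linarith
  have hm₂0 : (0:ℝ) < m₂ := by linarith
  refine ⟨?_, ?_, ?_⟩
  · rw [Matrix.det_fin_two]
    simp [Matrix.smul_apply, Matrix.one_apply]
    ring
  · nlinarith [mul_pos hr₁0 hk1pos, mul_pos hr₂0 hk2pos,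
      mul_pos (mul_pos hr₁0 hk1pos) hm₁0]
  · have h1 : 0 < r₁ * k₁ * (r₂ * k₂) * m₁ * m₂ := by positivity
    nlinarith
end
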